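/- Let b be a prime, let m ≥ 1, s ≥ 1 and t be integers with 0 ≤ t ≤ m, and let C_1, …, C_s be m×m matrices over 𝔽_b with ρ_m(C_1,…,C_s) ≥ m − t. Let 0 = w_1 ≤ w_2 ≤ ⋯ ≤ w_s be nonnegative integers with w_s ≤ t, and let C̃_1, …, C̃_s be the corresponding row reduced matrices. Then ρ_m(C̃_1,…,C̃_s) ≥ m − t. -/
import Mathlib


open scoped BigOperators

/-- Linear independence of the system consisting of the first `d j` rows of each matrix `C j`. -/
def rowsLinIndep (b m : ℕ) {ι : Type*} (C : ι → Matrix (Fin m) (Fin m) (ZMod b))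
    (d : ι → ℕ) : Prop :=
  LinearIndependent (ZMod b)
    (fun p : {p : ι × Fin m // (p.2 : ℕ) < d p.1} => C p.1.1 p.1.2)

/-- The linear independence parameter `ρ_m(C_1,…,C_s)`: the largest `d ∈ {0,…,m}` such that
for every choice of nonnegative integers `d_j` summing to `d`, the collection of the first `d_j`
rows of the matrices is linearly independent. -/
noncomputable def rho (b m : ℕ) {ι : Type*} [Fintype ι]
    (C : ι → Matrix (Fin m) (Fin m) (ZMod b)) : ℕ :=
  sSup {d | d ≤ m ∧ ∀ dv : ι → ℕ, (∑ j, dv j) = d → rowsLinIndep b m C dv}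

/-- Row reduced matrix: the last `min m w` rows are set to zero. -/
def rowReduced {b m : ℕ} (C : Matrix (Fin m) (Fin m) (ZMod b)) (w : ℕ) :
    Matrix (Fin m) (Fin m) (ZMod b) :=
  Matrix.of fun i r => if (i : ℕ) < m - min m w then C i r else 0

/-- Column-row reduced matrix: the last `min m w` rows and columns are set to zero. -/
def colRowReduced {b m : ℕ} (C : Matrix (Fin m) (Fin m) (ZMod b)) (w : ℕ) :
    Matrix (Fin m) (Fin m) (ZMod b) :=
  Matrix.of fun i r => if (i : ℕ) < m - min m w ∧ (r : ℕ) < m - min m w then C i r else 0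

/-- Reduced matrix with possibly different row/column reduction indices. -/
def colRowReduced' {b m : ℕ} (C : Matrix (Fin m) (Fin m) (ZMod b)) (wr wc : ℕ) :
    Matrix (Fin m) (Fin m) (ZMod b) :=
  Matrix.of fun i r => if (i : ℕ) < m - min m wr ∧ (r : ℕ) < m - min m wc then C i r else 0

/-- Upper-left `m × m` submatrix of an infinite matrix. -/
def upperLeft {b : ℕ} (C : Matrix ℕ ℕ (ZMod b)) (m : ℕ) : Matrix (Fin m) (Fin m) (ZMod b) :=
  Matrix.of fun i r => C (i : ℕ) (r : ℕ)

/-- The `k`-th coordinate value produced by the digital method with generating matrix `C`. -/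
noncomputable def digitalPoint (b m : ℕ) (C : Matrix (Fin m) (Fin m) (ZMod b)) (k : ℕ) : ℝ :=
  ∑ i : Fin m,
    ((C.mulVec fun r : Fin m => ((k / b ^ (r : ℕ)) % b : ZMod b)) i).val
      / (b : ℝ) ^ ((i : ℕ) + 1)

open Classical in
/-- The `b^m` points `P 0, …, P (b^m - 1)` form a `(t,m,|ι|)`-net in base `b` (counted with
multiplicity): every elementary interval of volume `b^(t-m)` contains exactly `b^t` points. -/
def isNet (b m t : ℕ) {ι : Type*} [Fintype ι] (P : ℕ → ι → ℝ) : Prop :=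
  ∀ d a : ι → ℕ, (∀ j, a j < b ^ d j) → (∑ j, d j) = m - t →
    ((Finset.range (b ^ m)).filter fun k =>
        ∀ j, (a j : ℝ) / (b : ℝ) ^ d j ≤ P k j ∧ P k j < ((a j : ℝ) + 1) / (b : ℝ) ^ d j).card
      = b ^ t

lemma rowsLinIndep_mono (b m : ℕ) {ι : Type*} (C : ι → Matrix (Fin m) (Fin m) (ZMod b))
    {dv dv' : ι → ℕ} (h : ∀ j, dv j ≤ dv' j) (H : rowsLinIndep b m C dv') :
    rowsLinIndep b m C dv := by
  have := H.comp
    (fun q : {p : ι × Fin m // (p.2 : ℕ) < dv p.1} =>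
      (⟨q.1, lt_of_lt_of_le q.2 (h q.1.1)⟩ : {p : ι × Fin m // (p.2 : ℕ) < dv' p.1}))
    (by intro a b hab; simp only [Subtype.mk.injEq] at hab; exact Subtype.ext hab)
  exact this

/-- if `w_s ≤ t`, then the row reduced matrices satisfy
`ρ_m(C̃_1,…,C̃_s) ≥ m − t`. -/
theorem rho_rowReduced_ge_of_ws_le (b m s t : ℕ) (hb : Nat.Prime b) (hm : 1 ≤ m) (hs : 1 ≤ s)
    (ht : t ≤ m) (C : Fin s → Matrix (Fin m) (Fin m) (ZMod b))
    (hrho : m - t ≤ rho b m C)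
    (w : Fin s → ℕ) (hw1 : w ⟨0, hs⟩ = 0) (hwmono : Monotone w)
    (hws : w ⟨s - 1, by omega⟩ ≤ t) :
    m - t ≤ rho b m (fun j => rowReduced (C j) (w j)) := by
  -- every d in the set is ≤ m, so bounded above
  have hbdd : ∀ (D : Fin s → Matrix (Fin m) (Fin m) (ZMod b)),
      BddAbove {d | d ≤ m ∧ ∀ dv : Fin s → ℕ, (∑ j, dv j) = d → rowsLinIndep b m D dv} :=
    fun D => ⟨m, fun d hd => hd.1⟩
  have hwle : ∀ j : Fin s, w j ≤ t := by
    intro j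
    refine le_trans (hwmono ?_) hws
    exact Fin.mk_le_mk.mpr (by omega)
  -- the key: every dv with sum m - t gives linear independence for C
  have hkey : ∀ dv : Fin s → ℕ, (∑ j, dv j) = m - t → rowsLinIndep b m C dv := by
    intro dv hsum
    set S := {d | d ≤ m ∧ ∀ dv : Fin s → ℕ, (∑ j, dv j) = d → rowsLinIndep b m C dv} with hS
    have h0 : (0 : ℕ) ∈ S := by
      refine ⟨Nat.zero_le m, fun dv' hdv' => ?_⟩
      have : ∀ j, dv' j = 0 := by
        intro j
        have := Finset.sum_eq_zero_iff.mp hdv' j (Finset.mem_univ j)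
        exact this
      unfold rowsLinIndep
      have : IsEmpty {p : Fin s × Fin m // (p.2 : ℕ) < dv' p.1} := by
        constructor; rintro ⟨p, hp⟩; rw [this p.1] at hp; omega
      exact linearIndependent_empty_type
    have hmem : rho b m C ∈ S := Nat.sSup_mem ⟨0, h0⟩ (hbdd C)
    set d0 := rho b m C with hd0
    -- extend dv to dv' summing to d0
    have i0 : Fin s := ⟨0, hs⟩
    set dv' : Fin s → ℕ :=
      fun j => dv j + (if j = (⟨0, hs⟩ : Fin s) then d0 - (m - t) else 0) with hdv'
    have hd0m : d0 ≤ m := hmem.1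
    have hsum' : (∑ j, dv' j) = d0 := by
      rw [hdv', Finset.sum_add_distrib, hsum,
        Finset.sum_ite_eq' Finset.univ (⟨0, hs⟩ : Fin s) (fun _ => d0 - (m - t))]
      simp only [Finset.mem_univ, if_true]
      omega
    have := hmem.2 dv' hsum'
    exact rowsLinIndep_mono b m C (fun j => Nat.le_add_right _ _) this
  -- now prove membership for the reduced matrices
  have hmem' : (m - t) ∈ {d | d ≤ m ∧ ∀ dv : Fin s → ℕ, (∑ j, dv j) = d →
      rowsLinIndep b m (fun j => rowReduced (C j) (w j)) dv} := by
    refine ⟨by omega, fun dv hsum => ?_⟩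
    have hle : ∀ j, dv j ≤ m - t := by
      intro j
      calc dv j ≤ ∑ j, dv j := Finset.single_le_sum (fun j _ => Nat.zero_le _) (Finset.mem_univ j)
        _ = m - t := hsum
    have heq : (fun p : {p : Fin s × Fin m // (p.2 : ℕ) < dv p.1} =>
        rowReduced (C p.1.1) (w p.1.1) p.1.2) =
        (fun p : {p : Fin s × Fin m // (p.2 : ℕ) < dv p.1} => C p.1.1 p.1.2) := by
      funext p
      have h1 : (p.1.2 : ℕ) < m - min m (w p.1.1) := by
        have := p.2
        have := hle p.1.1
        have := hwle p.1.1
        omega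
      funext r
      simp [rowReduced, h1]
    unfold rowsLinIndep
    rw [heq]
    exact hkey dv hsum
  exact le_csSup (hbdd _) hmem'
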